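/- For a linearly separable dataset, Assumption (cone inclusion) ⟨μ, y_i x_i⟩ > ((1−α)/(nα)) Σ_{j∈[n]} max{−⟨y_i x_i, y_j x_j⟩, 0} for all i (where μ = (1/n) Σ_j y_j x_j) is equivalent to the inclusion K ⊆ int(C), where K = {λ Σ_i α_i y_i x_i : α_i ∈ [α, 1], λ > 0} and C = {w ≠ 0 : ⟨w, y_i x_i⟩ ≥ 0 ∀i} with interior int(C) = {w : ⟨w, y_i x_i⟩ > 0 ∀i}. -/

import Mathlib

open Finset

/-- For a linearly separable dataset, the cone assumption
`⟨μ, y_i x_i⟩ > ((1−α)/(nα)) Σ_j max{−⟨y_i x_i, y_j x_j⟩, 0}` for all `i`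
is equivalent to the inclusion `K ⊆ int(C)`, where
`K = {λ Σ_i α_i y_i x_i : α_i ∈ [α,1], λ > 0}` and
`int(C) = {w : ⟨w, y_i x_i⟩ > 0 ∀i}`. -/
theorem stmt_12 (d n : ℕ) (hn : 0 < n)
    (α : ℝ) (hα : 0 < α) (hα1 : α ≤ 1)
    (x : Fin n → EuclideanSpace ℝ (Fin d)) (y : Fin n → ℝ)
    (hy : ∀ i, y i = 1 ∨ y i = -1)
    (hsep : ∃ v : EuclideanSpace ℝ (Fin d), ∀ i, (1 : ℝ) ≤ y i * inner ℝ v (x i))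
    (μ : EuclideanSpace ℝ (Fin d))
    (hμ : μ = ((n : ℝ)⁻¹) • ∑ i, y i • x i)
    (K intC : Set (EuclideanSpace ℝ (Fin d)))
    (hK : K = {w | ∃ (lam : ℝ) (c : Fin n → ℝ), 0 < lam ∧ (∀ i, c i ∈ Set.Icc α 1) ∧
      w = lam • ∑ i, c i • (y i • x i)})
    (hintC : intC = {w | ∀ i, (0 : ℝ) < inner ℝ w (y i • x i)}) :
    (∀ i, ((1 - α) / (n * α)) *
        ∑ j, max (-(inner ℝ (y i • x i) (y j • x j) : ℝ)) 0 <
        inner ℝ μ (y i • x i)) ↔ K ⊆ intC := by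
  subst hμ hK hintC
  have hnR : (0:ℝ) < n := Nat.cast_pos.mpr hn
  have hna : (0:ℝ) < (n:ℝ) * α := mul_pos hnR hα
  have hμi : ∀ i, (inner ℝ ((n:ℝ)⁻¹ • ∑ j, y j • x j) (y i • x i) : ℝ)
      = (n:ℝ)⁻¹ * ∑ j, (inner ℝ (y j • x j) (y i • x i) : ℝ) := by
    intro i
    rw [real_inner_smul_left, sum_inner]
  have hfield : ∀ T : ℝ, (n:ℝ)⁻¹ * T * ((n:ℝ) * α) = α * T := by
    intro T; field_simp
  constructor
  · intro h w hw
    obtain ⟨lam, c, hlam, hc, rfl⟩ := hw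
    intro i
    have key := h i
    rw [hμi] at key
    rw [div_mul_eq_mul_div, div_lt_iff₀ hna, hfield] at key
    have hwi : (inner ℝ (lam • ∑ j, c j • (y j • x j)) (y i • x i) : ℝ)
        = lam * ∑ j, c j * (inner ℝ (y j • x j) (y i • x i) : ℝ) := by
      rw [real_inner_smul_left, sum_inner]
      congr 1
      exact Finset.sum_congr rfl fun j _ => real_inner_smul_left _ _ _
    rw [hwi]
    have hterm : ∀ j, α * (inner ℝ (y j • x j) (y i • x i) : ℝ)
        - (1-α) * max (-(inner ℝ (y i • x i) (y j • x j) : ℝ)) 0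
        ≤ c j * (inner ℝ (y j • x j) (y i • x i)) := by
      intro j
      have hsym : (inner ℝ (y i • x i) (y j • x j) : ℝ) = inner ℝ (y j • x j) (y i • x i) :=
        real_inner_comm _ _
      rw [hsym]
      set a := (inner ℝ (y j • x j) (y i • x i) : ℝ)
      rcases le_or_gt 0 a with ha | ha
      · rw [max_eq_right (by linarith)]
        nlinarith [(hc j).1]
      · rw [max_eq_left (by linarith)]
        nlinarith [(hc j).2]
    have hsum : α * ∑ j, (inner ℝ (y j • x j) (y i • x i) : ℝ)
        - (1-α) * ∑ j, max (-(inner ℝ (y i • x i) (y j • x j) : ℝ)) 0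
        ≤ ∑ j, c j * (inner ℝ (y j • x j) (y i • x i)) := by
      rw [mul_sum, mul_sum, ← sum_sub_distrib]
      exact sum_le_sum fun j _ => hterm j
    exact mul_pos hlam (by linarith)
  · intro hsub i
    set a : Fin n → ℝ := fun j => (inner ℝ (y j • x j) (y i • x i) : ℝ) with ha
    set c : Fin n → ℝ := fun j => if 0 ≤ a j then α else 1 with hcdef
    have hc : ∀ j, c j ∈ Set.Icc α 1 := by
      intro j
      simp only [hcdef]
      split <;> constructor <;> linarith
    have hmem : (∑ j, c j • (y j • x j)) ∈
        {w | ∃ (lam : ℝ) (c : Fin n → ℝ), 0 < lam ∧ (∀ i, c i ∈ Set.Icc α 1) ∧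
          w = lam • ∑ i, c i • (y i • x i)} :=
      ⟨1, c, one_pos, hc, by rw [one_smul]⟩
    have hpos := hsub hmem i
    rw [sum_inner] at hpos
    have hrw : ∀ j ∈ Finset.univ, (inner ℝ (c j • (y j • x j)) (y i • x i) : ℝ) = c j * a j :=
      fun j _ => real_inner_smul_left _ _ _
    rw [Finset.sum_congr rfl hrw] at hpos
    have heq : ∑ j, c j * a j = α * (∑ j, a j) - (1-α) * ∑ j, max (-(a j)) 0 := by
      rw [mul_sum, mul_sum, ← sum_sub_distrib]
      refine sum_congr rfl fun j _ => ?_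
      simp only [hcdef]
      rcases le_or_gt 0 (a j) with h|h
      · rw [if_pos h, max_eq_right (by linarith)]; ring
      · rw [if_neg (not_le.mpr h), max_eq_left (by linarith)]; ring
    rw [heq] at hpos
    have hS : ∑ j, max (-(inner ℝ (y i • x i) (y j • x j) : ℝ)) 0 = ∑ j, max (-(a j)) 0 :=
      sum_congr rfl fun j _ => by rw [real_inner_comm]
    rw [hμi, hS, div_mul_eq_mul_div, div_lt_iff₀ hna, hfield]
    linarith
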